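/- arXiv:math/0612785 — 2 statements merged into one kernel-verified Lean document; each statement's English description precedes it below -/
import Mathlib

section
/- In a randomized trial with noncompliance, under randomization, exclusion restriction for never-takers and always-takers, and monotonicity (no defiers), the intent-to-treat effect E[Y(z=1)] − E[Y(z=0)] equals the probability of being a complier times the average causal effect among compliers (the instrumental variables / CACE identity). -/
open scoped Classical
open Finset

noncomputable def Pr {Ω : Type*} [Fintype Ω] (p : Ω → ℝ) (A : Ω → Prop) : ℝ :=
  ∑ ω, if A ω then p ω else 0

noncomputable def CE {Ω : Type*} [Fintype Ω] (p : Ω → ℝ) (f : Ω → ℝ) (A : Ω → Prop) : ℝ :=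
  (∑ ω, if A ω then p ω * f ω else 0) / Pr p A

noncomputable def Ex {Ω : Type*} [Fintype Ω] (p : Ω → ℝ) (f : Ω → ℝ) : ℝ :=
  ∑ ω, p ω * f ω

/-- under monotonicity (no defiers) and the exclusion restriction for
never-takers and always-takers, the intent-to-treat effect equals the probability of
being a complier times the average causal effect among compliers (the CACE identity).
Here `D z ω` is treatment received under assignment `z`, and `Y z d ω` is the
potential outcome under assignment `z` and treatment `d`. -/
theorem stmt2 {Ω : Type*} [Fintype Ω] (p : Ω → ℝ)
    (hp : ∀ ω, 0 ≤ p ω) (hsum : ∑ ω, p ω = 1)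
    (D : Bool → Ω → Bool) (Y : Bool → Bool → Ω → ℝ)
    (hmono : ∀ ω, D false ω = true → D true ω = true)
    (hexcl : ∀ ω, D false ω = D true ω →
      Y true (D true ω) ω = Y false (D false ω) ω)
    (hcomp : 0 < Pr p (fun ω => D false ω = false ∧ D true ω = true)) :
    Ex p (fun ω => Y true (D true ω) ω - Y false (D false ω) ω) =
      Pr p (fun ω => D false ω = false ∧ D true ω = true) *
        CE p (fun ω => Y true (D true ω) ω - Y false (D false ω) ω)
          (fun ω => D false ω = false ∧ D true ω = true) := by
  rw [CE, mul_div_cancel₀ _ (ne_of_gt hcomp)]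
  rw [Ex]
  apply Finset.sum_congr rfl
  intro ω _
  by_cases h : D false ω = false ∧ D true ω = true
  · simp [h]
  · have heq : D false ω = D true ω := by
      rcases Bool.eq_false_or_eq_true (D false ω) with h0 | h0
      · rw [h0, hmono ω h0]
      · rcases Bool.eq_false_or_eq_true (D true ω) with h1 | h1
        · exact absurd ⟨h0, h1⟩ h
        · rw [h0, h1]
    simp [h, hexcl ω heq]
end

section
/- Under the assumptions of the CACE identity, the complier average causal effect equals (E[Y | Z=1] − E[Y | Z=0]) / (E[D | Z=1] − E[D | Z=0]), provided the denominator is nonzero. -/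
open scoped Classical
open Finset

lemma ite0_congr {c d : Prop} [Decidable c] [Decidable d] {a b : ℝ}
    (hcd : c ↔ d) (h : c → a = b) :
    (if c then a else 0) = (if d then b else 0) := by
  by_cases hc : c
  · rw [if_pos hc, if_pos (hcd.mp hc), h hc]
  · rw [if_neg hc, if_neg (fun hd => hc (hcd.mpr hd))]

/-- under randomization of `Z` (independence from compliance behavior and
all potential outcomes), monotonicity, the exclusion restriction and `P(complier) > 0`,
the complier average causal effect equals the Wald ratio
`(E[Y|Z=1] − E[Y|Z=0]) / (E[D|Z=1] − E[D|Z=0])`, provided the denominator is nonzero. -/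
theorem stmt3 {Ω : Type*} [Fintype Ω] (p : Ω → ℝ)
    (hp : ∀ ω, 0 ≤ p ω) (hsum : ∑ ω, p ω = 1)
    (Z : Ω → Bool) (D : Bool → Ω → Bool) (Y : Bool → Bool → Ω → ℝ)
    (Yobs : Ω → ℝ) (Dobs : Ω → Bool)
    (hZ1 : 0 < Pr p (fun ω => Z ω = true))
    (hZ0 : Pr p (fun ω => Z ω = true) < 1)
    -- randomization: `Z` independent of the joint potential outcomes/compliance map
    (hind : ∀ (b : Bool)
      (A : ((Bool → Bool) × (Bool → Bool → ℝ)) → Prop),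
      Pr p (fun ω => Z ω = b ∧ A (fun z => D z ω, fun z d => Y z d ω)) =
        Pr p (fun ω => Z ω = b) *
          Pr p (fun ω => A (fun z => D z ω, fun z d => Y z d ω)))
    (hmono : ∀ ω, D false ω = true → D true ω = true)
    (hexcl : ∀ ω, D false ω = D true ω →
      Y true (D true ω) ω = Y false (D false ω) ω)
    (hcomp : 0 < Pr p (fun ω => D false ω = false ∧ D true ω = true))
    (hYobs : ∀ ω, Yobs ω = Y (Z ω) (D (Z ω) ω) ω)
    (hDobs : ∀ ω, Dobs ω = D (Z ω) ω)
    (hden : CE p (fun ω => if Dobs ω then (1:ℝ) else 0) (fun ω => Z ω = true) -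
            CE p (fun ω => if Dobs ω then (1:ℝ) else 0) (fun ω => Z ω = false) ≠ 0) :
    CE p (fun ω => Y true (D true ω) ω - Y false (D false ω) ω)
        (fun ω => D false ω = false ∧ D true ω = true) =
      (CE p Yobs (fun ω => Z ω = true) - CE p Yobs (fun ω => Z ω = false)) /
        (CE p (fun ω => if Dobs ω then (1:ℝ) else 0) (fun ω => Z ω = true) -
         CE p (fun ω => if Dobs ω then (1:ℝ) else 0) (fun ω => Z ω = false)) := by
  classical
  -- the map to "types" (compliance behavior + potential outcomes)
  have fiber : ∀ (Q : Ω → Prop) (F : ((Bool → Bool) × (Bool → Bool → ℝ)) → ℝ),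
      (∑ ω, if Q ω then p ω * F (fun z => D z ω, fun z d => Y z d ω) else 0) =
      ∑ v ∈ Finset.image (fun ω => ((fun z => D z ω, fun z d => Y z d ω) :
          (Bool → Bool) × (Bool → Bool → ℝ))) Finset.univ,
        F v * Pr p (fun ω => Q ω ∧ (fun z => D z ω, fun z d => Y z d ω) = v) := by
    intro Q F
    set T : Ω → ((Bool → Bool) × (Bool → Bool → ℝ)) :=
      fun ω => (fun z => D z ω, fun z d => Y z d ω) with hT
    have step : ∀ ω, (if Q ω then p ω * F (T ω) else 0) =
        ∑ v ∈ Finset.image T Finset.univ, (if Q ω ∧ T ω = v then F v * p ω else 0) := by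
      intro ω
      by_cases hQ : Q ω
      · simp only [hQ, true_and, if_true]
        rw [Finset.sum_ite_eq (Finset.image T Finset.univ) (T ω) (fun v => F v * p ω)]
        have : T ω ∈ Finset.image T Finset.univ :=
          Finset.mem_image_of_mem T (Finset.mem_univ ω)
        simp [this, mul_comm]
      · simp [hQ]
    calc (∑ ω, if Q ω then p ω * F (T ω) else 0)
        = ∑ ω, ∑ v ∈ Finset.image T Finset.univ,
            (if Q ω ∧ T ω = v then F v * p ω else 0) := by
          exact Finset.sum_congr rfl (fun ω _ => step ω)
      _ = ∑ v ∈ Finset.image T Finset.univ, ∑ ω,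
            (if Q ω ∧ T ω = v then F v * p ω else 0) := Finset.sum_comm
      _ = ∑ v ∈ Finset.image T Finset.univ, F v * Pr p (fun ω => Q ω ∧ T ω = v) := by
          apply Finset.sum_congr rfl
          intro v _
          unfold Pr
          rw [Finset.mul_sum]
          apply Finset.sum_congr rfl
          intro ω _
          by_cases h : Q ω ∧ T ω = v <;> simp [h]
  -- independence in expectation form
  have key : ∀ (b : Bool) (F : ((Bool → Bool) × (Bool → Bool → ℝ)) → ℝ),
      (∑ ω, if Z ω = b then p ω * F (fun z => D z ω, fun z d => Y z d ω) else 0) =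
        Pr p (fun ω => Z ω = b) *
          ∑ ω, p ω * F (fun z => D z ω, fun z d => Y z d ω) := by
    intro b F
    have hf := fiber (fun ω => Z ω = b) F
    beta_reduce at hf
    refine Eq.trans ?_ (hf.trans ?_)
    · apply Finset.sum_congr rfl
      intro ω _
      congr!
    have h2 : (∑ ω, p ω * F (fun z => D z ω, fun z d => Y z d ω)) =
        ∑ v ∈ Finset.image (fun ω => ((fun z => D z ω, fun z d => Y z d ω) :
            (Bool → Bool) × (Bool → Bool → ℝ))) Finset.univ,
          F v * Pr p (fun ω => (fun z => D z ω, fun z d => Y z d ω) = v) := by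
      have h := fiber (fun _ => True) F
      simp only [true_and, if_true] at h
      exact h
    rw [h2, Finset.mul_sum]
    apply Finset.sum_congr rfl
    intro v _
    have h3 := hind b (fun t => t = v)
    beta_reduce at h3
    rw [h3]
    ring
  -- basic probabilities
  have hsplit : Pr p (fun ω => Z ω = true) + Pr p (fun ω => Z ω = false) = 1 := by
    unfold Pr
    rw [← Finset.sum_add_distrib]
    rw [← hsum]
    apply Finset.sum_congr rfl
    intro ω _
    cases h : Z ω <;> simp [h]
  have hP1 : Pr p (fun ω => Z ω = true) ≠ 0 := ne_of_gt hZ1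
  have hP0pos : 0 < Pr p (fun ω => Z ω = false) := by linarith
  have hP0 : Pr p (fun ω => Z ω = false) ≠ 0 := ne_of_gt hP0pos
  -- identify the four conditional expectations
  have hE1 : CE p Yobs (fun ω => Z ω = true) = ∑ ω, p ω * Y true (D true ω) ω := by
    have h := key true (fun t : (Bool → Bool) × (Bool → Bool → ℝ) => t.2 true (t.1 true))
    simp only [CE]
    rw [div_eq_iff hP1]
    refine Eq.trans ?_ (h.trans ?_)
    · apply Finset.sum_congr rfl
      intro ω _
      by_cases hz : Z ω = true
      · rw [if_pos hz, if_pos hz]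
        simp [hYobs ω, hz]
      · rw [if_neg hz, if_neg hz]
    · beta_reduce
      ring
  have hE0 : CE p Yobs (fun ω => Z ω = false) = ∑ ω, p ω * Y false (D false ω) ω := by
    have h := key false (fun t : (Bool → Bool) × (Bool → Bool → ℝ) => t.2 false (t.1 false))
    simp only [CE]
    rw [div_eq_iff hP0]
    refine Eq.trans ?_ (h.trans ?_)
    · apply Finset.sum_congr rfl
      intro ω _
      by_cases hz : Z ω = false
      · rw [if_pos hz, if_pos hz]
        simp [hYobs ω, hz]
      · rw [if_neg hz, if_neg hz]
    · beta_reduce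
      ring
  have hq1 : CE p (fun ω => if Dobs ω then (1:ℝ) else 0) (fun ω => Z ω = true) =
      ∑ ω, p ω * (if D true ω then (1:ℝ) else 0) := by
    have h := key true (fun t : (Bool → Bool) × (Bool → Bool → ℝ) => if t.1 true then (1:ℝ) else 0)
    simp only [CE]
    rw [div_eq_iff hP1]
    refine Eq.trans ?_ (h.trans ?_)
    · apply Finset.sum_congr rfl
      intro ω _
      by_cases hz : Z ω = true
      · rw [if_pos hz, if_pos hz]
        simp [hDobs ω, hz]
      · rw [if_neg hz, if_neg hz]
    · beta_reduce
      ring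
  have hq0 : CE p (fun ω => if Dobs ω then (1:ℝ) else 0) (fun ω => Z ω = false) =
      ∑ ω, p ω * (if D false ω then (1:ℝ) else 0) := by
    have h := key false (fun t : (Bool → Bool) × (Bool → Bool → ℝ) => if t.1 false then (1:ℝ) else 0)
    simp only [CE]
    rw [div_eq_iff hP0]
    refine Eq.trans ?_ (h.trans ?_)
    · apply Finset.sum_congr rfl
      intro ω _
      by_cases hz : Z ω = false
      · rw [if_pos hz, if_pos hz]
        simp [hDobs ω, hz]
      · rw [if_neg hz, if_neg hz]
    · beta_reduce
      ring
  -- denominator equals P(complier)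
  have hden2 : CE p (fun ω => if Dobs ω then (1:ℝ) else 0) (fun ω => Z ω = true) -
      CE p (fun ω => if Dobs ω then (1:ℝ) else 0) (fun ω => Z ω = false) =
      Pr p (fun ω => D false ω = false ∧ D true ω = true) := by
    rw [hq1, hq0]
    unfold Pr
    rw [← Finset.sum_sub_distrib]
    apply Finset.sum_congr rfl
    intro ω _
    rcases hf : D false ω with _ | _ <;> rcases ht : D true ω with _ | _ <;>
      simp_all [hmono ω]
  -- numerator equals the CACE numerator
  have hnum : CE p Yobs (fun ω => Z ω = true) - CE p Yobs (fun ω => Z ω = false) =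
      ∑ ω, if (D false ω = false ∧ D true ω = true) then
        p ω * (Y true (D true ω) ω - Y false (D false ω) ω) else 0 := by
    rw [hE1, hE0, ← Finset.sum_sub_distrib]
    apply Finset.sum_congr rfl
    intro ω _
    by_cases h : D false ω = false ∧ D true ω = true
    · simp [h, mul_sub]
    · have heq : D false ω = D true ω := by
        rcases hf : D false ω with _ | _ <;> rcases ht : D true ω with _ | _ <;>
          simp_all [hmono ω]
      rw [if_neg h, hexcl ω heq]
      ring
  rw [hnum, hden2]
  simp only [CE]
end
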